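/- Let L be a Lie algebra over ℂ and Ω = (μ_k)_{k ∈ ℤ} a finitely supported family of complex numbers. Define χ_Ω on the twisted Schrödinger–Virasoro Lie algebra SV by χ_Ω(L_m, L_n) = Σ_{k ∈ ℤ} μ_k M_{m+n+k} on basis elements L_m, L_n, and χ_Ω(x, y) = 0 whenever x or y lies in the span of {Y_i, M_i : i ∈ ℤ}, extended bilinearly. Then χ_Ω is a biderivation of SV, and χ_Ω is symmetric: χ_Ω(x,y) = χ_Ω(y,x) for all x, y. -/

import Mathlib

theorem stmt7
    (V : Type) [LieRing V] [LieAlgebra ℂ V]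
    (L Y M : ℤ → V)
    (b : Module.Basis (Fin 3 × ℤ) ℂ V)
    (hbL : ∀ i : ℤ, b ((0 : Fin 3), i) = L i)
    (hbY : ∀ i : ℤ, b ((1 : Fin 3), i) = Y i)
    (hbM : ∀ i : ℤ, b ((2 : Fin 3), i) = M i)
    (hLL : ∀ m n : ℤ, ⁅L m, L n⁆ = ((m : ℂ) - n) • L (m + n))
    (hLY : ∀ m n : ℤ, ⁅L m, Y n⁆ = ((m : ℂ) / 2 - n) • Y (m + n))
    (hLM : ∀ m n : ℤ, ⁅L m, M n⁆ = (-(n : ℂ)) • M (m + n))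
    (hYY : ∀ m n : ℤ, ⁅Y m, Y n⁆ = ((m : ℂ) - n) • M (m + n))
    (hYM : ∀ m n : ℤ, ⁅Y m, M n⁆ = 0)
    (hMM : ∀ m n : ℤ, ⁅M m, M n⁆ = 0)
    (μ : ℤ →₀ ℂ)
    (χ : V →ₗ[ℂ] V →ₗ[ℂ] V)
    (hχLL : ∀ m n : ℤ, χ (L m) (L n) = μ.sum fun k c => c • M (m + n + k))
    (hχ0 : ∀ x y : V,
      (x ∈ Submodule.span ℂ (Set.range Y ∪ Set.range M) ∨
       y ∈ Submodule.span ℂ (Set.range Y ∪ Set.range M)) → χ x y = 0) :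
    (∀ x y z : V, χ ⁅x, y⁆ z = ⁅x, χ y z⁆ + ⁅χ x z, y⁆) ∧
    (∀ x y z : V, χ x ⁅y, z⁆ = ⁅χ x y, z⁆ + ⁅y, χ x z⁆) ∧
    (∀ x y : V, χ x y = χ y x) := by
  -- membership lemmas
  have hYW : ∀ n : ℤ, Y n ∈ Submodule.span ℂ (Set.range Y ∪ Set.range M) :=
    fun n => Submodule.subset_span (Set.mem_union_left _ ⟨n, rfl⟩)
  have hMW : ∀ n : ℤ, M n ∈ Submodule.span ℂ (Set.range Y ∪ Set.range M) :=
    fun n => Submodule.subset_span (Set.mem_union_right _ ⟨n, rfl⟩)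
  -- vanishing lemmas for χ
  have hχY1 : ∀ (n : ℤ) (x : V), χ (Y n) x = 0 := fun n x => hχ0 _ _ (Or.inl (hYW n))
  have hχY2 : ∀ (n : ℤ) (x : V), χ x (Y n) = 0 := fun n x => hχ0 _ _ (Or.inr (hYW n))
  have hχM1 : ∀ (n : ℤ) (x : V), χ (M n) x = 0 := fun n x => hχ0 _ _ (Or.inl (hMW n))
  have hχM2 : ∀ (n : ℤ) (x : V), χ x (M n) = 0 := fun n x => hχ0 _ _ (Or.inr (hMW n))
  -- reversed brackets
  have hML : ∀ m n : ℤ, ⁅M m, L n⁆ = (m : ℂ) • M (n + m) := by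
    intro m n
    rw [← lie_skew, hLM, neg_smul, neg_neg]
  have hYL : ∀ m n : ℤ, ⁅Y m, L n⁆ = ((m : ℂ) - (n : ℂ) / 2) • Y (n + m) := by
    intro m n
    rw [← lie_skew, hLY]
    module
  have hMY : ∀ m n : ℤ, ⁅M m, Y n⁆ = 0 := by
    intro m n
    rw [← lie_skew, hYM, neg_zero]
  -- sums of brackets
  have lie_sum' : ∀ (x : V) (s : Finset ℤ) (f : ℤ → V),
      ⁅x, ∑ k ∈ s, f k⁆ = ∑ k ∈ s, ⁅x, f k⁆ := by
    intro x s f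
    classical
    induction s using Finset.induction_on with
    | empty => simp
    | insert _ _ h ih => simp [Finset.sum_insert h, lie_add, ih]
  have sum_lie' : ∀ (y : V) (s : Finset ℤ) (f : ℤ → V),
      ⁅∑ k ∈ s, f k, y⁆ = ∑ k ∈ s, ⁅f k, y⁆ := by
    intro y s f
    classical
    induction s using Finset.induction_on with
    | empty => simp
    | insert _ _ h ih => simp [Finset.sum_insert h, add_lie, ih]
  -- brackets with the μ-sums
  have hLsum : ∀ (a : ℤ) (g : ℤ → ℤ),
      ⁅L a, μ.sum fun k c => c • M (g k)⁆ = μ.sum fun k c => (c * (-(g k : ℂ))) • M (a + g k) := by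
    intro a g
    rw [Finsupp.sum, Finsupp.sum, lie_sum']
    refine Finset.sum_congr rfl fun k _ => ?_
    rw [lie_smul, hLM, smul_smul]
  have hsumL : ∀ (n : ℤ) (g : ℤ → ℤ),
      ⁅μ.sum fun k c => c • M (g k), L n⁆ = μ.sum fun k c => (c * ((g k : ℂ))) • M (n + g k) := by
    intro n g
    rw [Finsupp.sum, Finsupp.sum, sum_lie']
    refine Finset.sum_congr rfl fun k _ => ?_
    rw [smul_lie, hML, smul_smul]
  have hYsum : ∀ (a : ℤ) (g : ℤ → ℤ), ⁅Y a, μ.sum fun k c => c • M (g k)⁆ = 0 := by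
    intro a g
    rw [Finsupp.sum, lie_sum']
    refine Finset.sum_eq_zero fun k _ => ?_
    rw [lie_smul, hYM, smul_zero]
  have hMsum : ∀ (a : ℤ) (g : ℤ → ℤ), ⁅M a, μ.sum fun k c => c • M (g k)⁆ = 0 := by
    intro a g
    rw [Finsupp.sum, lie_sum']
    refine Finset.sum_eq_zero fun k _ => ?_
    rw [lie_smul, hMM, smul_zero]
  have hsumY : ∀ (a : ℤ) (g : ℤ → ℤ), ⁅μ.sum fun k c => c • M (g k), Y a⁆ = 0 := by
    intro a g
    rw [Finsupp.sum, sum_lie']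
    refine Finset.sum_eq_zero fun k _ => ?_
    rw [smul_lie, hMY, smul_zero]
  have hsumM : ∀ (a : ℤ) (g : ℤ → ℤ), ⁅μ.sum fun k c => c • M (g k), M a⁆ = 0 := by
    intro a g
    rw [Finsupp.sum, sum_lie']
    refine Finset.sum_eq_zero fun k _ => ?_
    rw [smul_lie, hMM, smul_zero]
  -- basis case for identity 1
  have key1 : ∀ (i j k : Fin 3) (mi mj mk : ℤ),
      χ ⁅b (i, mi), b (j, mj)⁆ (b (k, mk)) =
        ⁅b (i, mi), χ (b (j, mj)) (b (k, mk))⁆ + ⁅χ (b (i, mi)) (b (k, mk)), b (j, mj)⁆ := by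
    intro i j k mi mj mk
    fin_cases i <;> fin_cases j <;> fin_cases k <;>
      simp only [Fin.mk_zero, Fin.mk_one, show (⟨2, by omega⟩ : Fin 3) = 2 from rfl, hbL, hbY, hbM] <;>
      simp only [hLL, hLY, hLM, hYY, hYM, hMM, hML, hYL, hMY, hχLL, hχY1, hχY2, hχM1, hχM2,
        map_smul, LinearMap.smul_apply, smul_zero, lie_zero, zero_lie, add_zero, zero_add, map_zero, LinearMap.zero_apply,
        hYsum, hMsum, hsumY, hsumM, hLsum, hsumL]
    -- remaining: the L,L,L case
    rw [Finsupp.smul_sum, Finsupp.sum, Finsupp.sum, Finsupp.sum, ← Finset.sum_add_distrib]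
    refine Finset.sum_congr rfl fun k _ => ?_
    rw [show mi + (mj + mk + k) = mi + mj + mk + k by ring,
      show mj + (mi + mk + k) = mi + mj + mk + k by ring,
      smul_smul, ← add_smul]
    congr 1
    push_cast
    ring
  -- basis case for identity 2
  have key2 : ∀ (i j k : Fin 3) (mi mj mk : ℤ),
      χ (b (i, mi)) ⁅b (j, mj), b (k, mk)⁆ =
        ⁅χ (b (i, mi)) (b (j, mj)), b (k, mk)⁆ + ⁅b (j, mj), χ (b (i, mi)) (b (k, mk))⁆ := by
    intro i j k mi mj mk
    fin_cases i <;> fin_cases j <;> fin_cases k <;>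
      simp only [Fin.mk_zero, Fin.mk_one, show (⟨2, by omega⟩ : Fin 3) = 2 from rfl, hbL, hbY, hbM] <;>
      simp only [hLL, hLY, hLM, hYY, hYM, hMM, hML, hYL, hMY, hχLL, hχY1, hχY2, hχM1, hχM2,
        map_smul, LinearMap.smul_apply, smul_zero, lie_zero, zero_lie, add_zero, zero_add, map_zero, LinearMap.zero_apply,
        hYsum, hMsum, hsumY, hsumM, hLsum, hsumL]
    rw [Finsupp.smul_sum, Finsupp.sum, Finsupp.sum, Finsupp.sum, ← Finset.sum_add_distrib]
    refine Finset.sum_congr rfl fun k _ => ?_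
    rw [show mi + (mj + mk) + k = mi + mj + mk + k by ring,
      show mk + (mi + mj + k) = mi + mj + mk + k by ring,
      show mj + (mi + mk + k) = mi + mj + mk + k by ring,
      smul_smul, ← add_smul]
    congr 1
    push_cast
    ring
  -- basis case for symmetry
  have key3 : ∀ (i j : Fin 3) (mi mj : ℤ),
      χ (b (i, mi)) (b (j, mj)) = χ (b (j, mj)) (b (i, mi)) := by
    intro i j mi mj
    fin_cases i <;> fin_cases j <;>
      simp only [Fin.mk_zero, Fin.mk_one, show (⟨2, by omega⟩ : Fin 3) = 2 from rfl, hbL, hbY, hbM] <;>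
      simp only [hχY1, hχY2, hχM1, hχM2, hχLL]
    exact Finsupp.sum_congr fun k _ => by rw [add_comm mi mj]
  -- extension to all of V
  have hspan : ∀ x : V, x ∈ Submodule.span ℂ (Set.range ⇑b) := fun x => b.mem_span x
  refine ⟨?_, ?_, ?_⟩
  · -- identity 1
    have step_z : ∀ (i j : Fin 3 × ℤ) (z : V),
        χ ⁅b i, b j⁆ z = ⁅b i, χ (b j) z⁆ + ⁅χ (b i) z, b j⁆ := by
      intro i j z
      induction hspan z using Submodule.span_induction with
      | mem w hw => obtain ⟨⟨k, mk⟩, rfl⟩ := hw; exact key1 i.1 j.1 k i.2 j.2 mk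
      | zero => simp
      | add w1 w2 _ _ h1 h2 =>
        simp only [map_add, lie_add, add_lie]
        rw [h1, h2]; abel
      | smul c w _ h =>
        simp only [map_smul, lie_smul, smul_lie, LinearMap.smul_apply]
        rw [h, smul_add]
    have step_y : ∀ (i : Fin 3 × ℤ) (y z : V),
        χ ⁅b i, y⁆ z = ⁅b i, χ y z⁆ + ⁅χ (b i) z, y⁆ := by
      intro i y z
      induction hspan y using Submodule.span_induction with
      | mem w hw => obtain ⟨j, rfl⟩ := hw; exact step_z i j z
      | zero => simp
      | add w1 w2 _ _ h1 h2 =>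
        simp only [map_add, lie_add, add_lie, LinearMap.add_apply]
        rw [h1, h2]; abel
      | smul c w _ h =>
        simp only [map_smul, lie_smul, smul_lie, LinearMap.smul_apply]
        rw [h, smul_add]
    intro x y z
    induction hspan x using Submodule.span_induction with
    | mem w hw => obtain ⟨i, rfl⟩ := hw; exact step_y i y z
    | zero => simp
    | add w1 w2 _ _ h1 h2 =>
      simp only [map_add, lie_add, add_lie, LinearMap.add_apply]
      rw [h1, h2]; abel
    | smul c w _ h =>
      simp only [map_smul, lie_smul, smul_lie, LinearMap.smul_apply]
      rw [h, smul_add]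
  · -- identity 2
    have step_z : ∀ (i j : Fin 3 × ℤ) (z : V),
        χ (b i) ⁅b j, z⁆ = ⁅χ (b i) (b j), z⁆ + ⁅b j, χ (b i) z⁆ := by
      intro i j z
      induction hspan z using Submodule.span_induction with
      | mem w hw => obtain ⟨⟨k, mk⟩, rfl⟩ := hw; exact key2 i.1 j.1 k i.2 j.2 mk
      | zero => simp
      | add w1 w2 _ _ h1 h2 =>
        simp only [map_add, lie_add, add_lie, LinearMap.add_apply]
        rw [h1, h2]; abel
      | smul c w _ h =>
        simp only [map_smul, lie_smul, smul_lie, LinearMap.smul_apply]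
        rw [h, smul_add]
    have step_y : ∀ (i : Fin 3 × ℤ) (y z : V),
        χ (b i) ⁅y, z⁆ = ⁅χ (b i) y, z⁆ + ⁅y, χ (b i) z⁆ := by
      intro i y z
      induction hspan y using Submodule.span_induction with
      | mem w hw => obtain ⟨j, rfl⟩ := hw; exact step_z i j z
      | zero => simp
      | add w1 w2 _ _ h1 h2 =>
        simp only [map_add, lie_add, add_lie, LinearMap.add_apply]
        rw [h1, h2]; abel
      | smul c w _ h =>
        simp only [map_smul, lie_smul, smul_lie, LinearMap.smul_apply]
        rw [h, smul_add]
    intro x y z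
    induction hspan x using Submodule.span_induction with
    | mem w hw => obtain ⟨i, rfl⟩ := hw; exact step_y i y z
    | zero => simp
    | add w1 w2 _ _ h1 h2 =>
      simp only [map_add, lie_add, add_lie, LinearMap.add_apply]
      rw [h1, h2]; abel
    | smul c w _ h =>
      simp only [map_smul, lie_smul, smul_lie, LinearMap.smul_apply]
      rw [h, smul_add]
  · -- symmetry
    have step_y : ∀ (i : Fin 3 × ℤ) (y : V), χ (b i) y = χ y (b i) := by
      intro i y
      induction hspan y using Submodule.span_induction with
      | mem w hw => obtain ⟨⟨j, mj⟩, rfl⟩ := hw; exact key3 i.1 j i.2 mj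
      | zero => simp
      | add w1 w2 _ _ h1 h2 =>
        simp only [map_add, LinearMap.add_apply]
        rw [h1, h2]
      | smul c w _ h =>
        simp only [map_smul, LinearMap.smul_apply]
        rw [h]
    intro x y
    induction hspan x using Submodule.span_induction with
    | mem w hw => obtain ⟨i, rfl⟩ := hw; exact step_y i y
    | zero => simp
    | add w1 w2 _ _ h1 h2 =>
      simp only [map_add, LinearMap.add_apply]
      rw [h1, h2]
    | smul c w _ h =>
      simp only [map_smul, LinearMap.smul_apply]
      rw [h]
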